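/- Let d ≥ 1, let T ≥ 2 be an integer, let G, D > 0, let 𝒟 ⊆ ℝ^d be a convex set of diameter at most D, let f_1,…,f_T : ℝ^d → ℝ be convex differentiable functions, let x_t, x* ∈ 𝒟, set g_t = ∇f_t(x_t) with ‖g_t‖ ≤ G, and set B = 2 ln(√3((log₂ T)/2 + 3)) + 10 d ln T and V = Σ_{t=1}^T ⟨g_t, x_t − x*⟩². Let η_i = 2^{−i}/(5DG) for i = 0,…,⌈(log₂ T)/2⌉, and for each i let y_t^i ∈ 𝒟 (t = 1,…,T). If for every i both Σ_{t=1}^T ℓ_t^{η_i}(x_t) − Σ_{t=1}^T ℓ_t^{η_i}(y_t^i) ≤ 2 ln(√3((log₂ T)/2 + 3)) and Σ_{t=1}^T ℓ_t^{η_i}(y_t^i) − Σ_{t=1}^T ℓ_t^{η_i}(x*) ≤ 10 d ln T hold, then Σ_{t=1}^T f_t(x_t) − Σ_{t=1}^T f_t(x*) ≤ 3√(V·B) + 10GD·B. -/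

import Mathlib

open Real

lemma grad_ineq_aux {E : Type*} [NormedAddCommGroup E] [InnerProductSpace ℝ E]
    [CompleteSpace E]
    {f : E → ℝ} {g p q : E}
    (hconv : ConvexOn ℝ Set.univ f) (hg : HasGradientAt f g p) :
    f p - f q ≤ inner ℝ g (p - q) := by
  set c : ℝ → E := fun θ => p + θ • (q - p) with hc
  have h1 : HasDerivAt c (q - p) 0 := by
    simpa [hc] using ((hasDerivAt_id (0 : ℝ)).smul_const (q - p)).const_add p
  have hp0 : c 0 = p := by simp [hc]
  have hfd : HasFDerivAt f ((InnerProductSpace.toDual ℝ E) g) (c 0) := by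
    rw [hp0]; exact hg.hasFDerivAt
  have h2 : HasDerivAt (f ∘ c) ((InnerProductSpace.toDual ℝ E) g (q - p)) 0 :=
    hfd.comp_hasDerivAt 0 h1
  have h2' : HasDerivAt (f ∘ c) (inner ℝ g (q - p) : ℝ) 0 := by
    simpa [InnerProductSpace.toDual_apply_apply] using h2
  have hφ : ConvexOn ℝ Set.univ (f ∘ c) := by
    have := hconv.comp_affineMap (AffineMap.lineMap p q : ℝ →ᵃ[ℝ] E)
    simp only [Set.preimage_univ] at this
    rw [show f ∘ c = f ∘ ⇑(AffineMap.lineMap p q : ℝ →ᵃ[ℝ] E) from ?_]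
    · exact this
    funext θ
    simp [hc, AffineMap.lineMap_apply, Function.comp]
    rw [smul_sub]
    abel
  have hs := hφ.le_slope_of_hasDerivAt (Set.mem_univ (0:ℝ)) (Set.mem_univ (1:ℝ))
    one_pos h2'
  have hslope : slope (f ∘ c) 0 1 = f q - f p := by
    simp [slope, hc, Function.comp]
  rw [hslope] at hs
  have hneg : (inner ℝ g (q - p) : ℝ) = - inner ℝ g (p - q) := by
    rw [← inner_neg_right]; congr 1; abel
  linarith [hneg ▸ hs]

set_option maxHeartbeats 2000000 in
theorem maler_expConcave_data_dependent_regret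
    (d T : ℕ) (hd : 1 ≤ d) (hT : 2 ≤ T)
    (G D : ℝ) (hG : 0 < G) (hD : 0 < D)
    (𝒟 : Set (EuclideanSpace ℝ (Fin d))) (hconv : Convex ℝ 𝒟)
    (hdiam : ∀ a ∈ 𝒟, ∀ b ∈ 𝒟, ‖a - b‖ ≤ D)
    (f : ℕ → EuclideanSpace ℝ (Fin d) → ℝ)
    (hfconv : ∀ t ∈ Finset.Icc 1 T, ConvexOn ℝ Set.univ (f t))
    (x : ℕ → EuclideanSpace ℝ (Fin d)) (xstar : EuclideanSpace ℝ (Fin d))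
    (hx : ∀ t ∈ Finset.Icc 1 T, x t ∈ 𝒟) (hxstar : xstar ∈ 𝒟)
    (g : ℕ → EuclideanSpace ℝ (Fin d))
    (hgrad : ∀ t ∈ Finset.Icc 1 T, HasGradientAt (f t) (g t) (x t))
    (hg : ∀ t ∈ Finset.Icc 1 T, ‖g t‖ ≤ G)
    (B V : ℝ)
    (hB : B = 2 * Real.log (Real.sqrt 3 * (Real.logb 2 T / 2 + 3)) + 10 * d * Real.log T)
    (hV : V = ∑ t ∈ Finset.Icc 1 T, (inner ℝ (g t) (x t - xstar) : ℝ)^2)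
    (η : ℕ → ℝ) (hη : ∀ i, η i = (2 : ℝ)^(-(i : ℤ)) / (5 * D * G))
    (y : ℕ → ℕ → EuclideanSpace ℝ (Fin d))
    (hy : ∀ i ≤ ⌈Real.logb 2 T / 2⌉₊, ∀ t ∈ Finset.Icc 1 T, y i t ∈ 𝒟)
    (l : ℕ → ℕ → EuclideanSpace ℝ (Fin d) → ℝ)
    (hl : ∀ i t z, l i t z =
      -(η i) * (inner ℝ (x t - z) (g t) : ℝ) + (η i)^2 * (inner ℝ (x t - z) (g t) : ℝ)^2)
    (hmeta : ∀ i ≤ ⌈Real.logb 2 T / 2⌉₊,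
      (∑ t ∈ Finset.Icc 1 T, l i t (x t)) - (∑ t ∈ Finset.Icc 1 T, l i t (y i t))
        ≤ 2 * Real.log (Real.sqrt 3 * (Real.logb 2 T / 2 + 3)))
    (hexpert : ∀ i ≤ ⌈Real.logb 2 T / 2⌉₊,
      (∑ t ∈ Finset.Icc 1 T, l i t (y i t)) - (∑ t ∈ Finset.Icc 1 T, l i t xstar)
        ≤ 10 * d * Real.log T) :
    (∑ t ∈ Finset.Icc 1 T, f t (x t)) - (∑ t ∈ Finset.Icc 1 T, f t xstar)
      ≤ 3 * Real.sqrt (V * B) + 10 * G * D * B := by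
  set N := ⌈Real.logb 2 T / 2⌉₊ with hN
  set r : ℕ → ℝ := fun t => inner ℝ (g t) (x t - xstar) with hr
  set R : ℝ := ∑ t ∈ Finset.Icc 1 T, r t with hR
  have hDG : (0:ℝ) < 5 * D * G := by positivity
  -- bound on |r t|
  have hrabs : ∀ t ∈ Finset.Icc 1 T, |r t| ≤ G * D := by
    intro t ht
    calc |r t| ≤ ‖g t‖ * ‖x t - xstar‖ := abs_real_inner_le_norm _ _
    _ ≤ G * D := by
        apply mul_le_mul (hg t ht) (hdiam _ (hx t ht) _ hxstar) (norm_nonneg _)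
          (le_of_lt hG)
  -- V nonneg and V ≤ G^2 D^2 T
  have hV0 : 0 ≤ V := by
    rw [hV]; exact Finset.sum_nonneg fun t _ => sq_nonneg _
  have hVT : V ≤ G^2 * D^2 * T := by
    rw [hV]
    calc ∑ t ∈ Finset.Icc 1 T, (inner ℝ (g t) (x t - xstar) : ℝ)^2
        ≤ ∑ t ∈ Finset.Icc 1 T, (G * D)^2 := by
          apply Finset.sum_le_sum
          intro t ht
          rw [← sq_abs]
          exact pow_le_pow_left₀ (abs_nonneg _) (hrabs t ht) 2
    _ = T * (G * D)^2 := by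
          rw [Finset.sum_const, Nat.card_Icc]; simp
    _ = G^2 * D^2 * T := by ring
  -- B ≥ 1
  have hlogT : Real.log 2 ≤ Real.log T := by
    apply Real.log_le_log (by norm_num)
    exact_mod_cast hT
  have hlog2 : (0.6931471803 : ℝ) < Real.log 2 := Real.log_two_gt_d9
  have hlogbT : 1 ≤ Real.logb 2 T := by
    rw [Real.le_logb_iff_rpow_le (by norm_num) (by positivity)]
    · norm_num; exact_mod_cast hT
  have hfirst : 0 ≤ 2 * Real.log (Real.sqrt 3 * (Real.logb 2 T / 2 + 3)) := by
    have h3 : (1:ℝ) ≤ Real.sqrt 3 := by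
      rw [show (1:ℝ) = Real.sqrt 1 by simp]
      exact Real.sqrt_le_sqrt (by norm_num)
    have : (1:ℝ) ≤ Real.sqrt 3 * (Real.logb 2 T / 2 + 3) := by nlinarith
    have := Real.log_nonneg this
    linarith
  have hB1 : 1 ≤ B := by
    have : (10:ℝ) * 1 * Real.log 2 ≤ 10 * d * Real.log T := by
      apply mul_le_mul _ hlogT (by linarith) (by positivity)
      have : (1:ℝ) ≤ (d:ℝ) := by exact_mod_cast hd
      nlinarith
    rw [hB]; nlinarith
  have hB0 : 0 < B := by linarith
  -- key inequality from meta + expert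
  have hkey : ∀ i ≤ N, η i * R - (η i)^2 * V ≤ B := by
    intro i hi
    have hsum := add_le_add (hmeta i hi) (hexpert i hi)
    have e1 : ∀ t ∈ Finset.Icc 1 T, l i t (x t) = 0 := by
      intro t ht; rw [hl]; simp
    have e2 : ∀ t ∈ Finset.Icc 1 T,
        l i t xstar = -(η i) * r t + (η i)^2 * (r t)^2 := by
      intro t ht; rw [hl, hr]
      rw [real_inner_comm]
    rw [Finset.sum_congr rfl e1, Finset.sum_congr rfl e2] at hsum
    rw [Finset.sum_add_distrib] at hsum
    simp only [Finset.sum_const, ← Finset.mul_sum, smul_zero] at hsum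
    have hVr : V = ∑ t ∈ Finset.Icc 1 T, (r t)^2 := hV
    rw [hB, hR, hVr]
    linarith
  -- regret bounded by linearized regret
  have hlin : (∑ t ∈ Finset.Icc 1 T, f t (x t)) - (∑ t ∈ Finset.Icc 1 T, f t xstar)
      ≤ R := by
    rw [hR, ← Finset.sum_sub_distrib]
    apply Finset.sum_le_sum
    intro t ht
    exact grad_ineq_aux (hfconv t ht) (hgrad t ht)
  have hsqrtVB : 0 ≤ Real.sqrt (V * B) := Real.sqrt_nonneg _
  -- generic step
  have hstep : ∀ e : ℝ, 0 < e → e * R - e^2 * V ≤ B → R ≤ B / e + e * V := by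
    intro e he h
    rw [← mul_le_mul_iff_right₀ he]
    calc e * R ≤ B + e^2 * V := by linarith
    _ = e * (B / e + e * V) := by field_simp
  -- now bound R
  have hmain : R ≤ 3 * Real.sqrt (V * B) + 10 * G * D * B := by
    rcases le_or_gt V (25 * D^2 * G^2 * B) with hcase | hcase
    · -- case 1 : use i = 0
      have hη0 : η 0 = 1 / (5 * D * G) := by rw [hη]; norm_num
      have hRle : R ≤ 5 * D * G * B + V / (5 * D * G) := by
        have h := hstep _ (show (0:ℝ) < 1 / (5 * D * G) by positivity)
          (by rw [← hη0]; exact hkey 0 (Nat.zero_le N))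
        calc R ≤ B / (1 / (5 * D * G)) + (1 / (5 * D * G)) * V := h
        _ = 5 * D * G * B + V / (5 * D * G) := by field_simp
      have hVdiv : V / (5 * D * G) ≤ Real.sqrt (V * B) := by
        rw [Real.le_sqrt (by positivity) (mul_nonneg hV0 (le_of_lt hB0)), div_pow, div_le_iff₀ (by positivity)]
        nlinarith
      have h1 : 5 * D * G * B ≤ 10 * G * D * B := by nlinarith
      linarith
    · -- case 2
      have hVpos : 0 < V := lt_trans (by positivity) hcase
      set s : ℝ := Real.sqrt (V / B) with hs
      have hs0 : 0 < s := Real.sqrt_pos.mpr (by positivity)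
      have hs2 : s^2 = V / B := Real.sq_sqrt (by positivity)
      have hs2' : s^2 * B = V := by rw [hs2]; field_simp
      have h25 : 25 * D^2 * G^2 < s^2 := by nlinarith
      have hsgt : 5 * D * G < s := by
        by_contra hle
        push_neg at hle
        have : s^2 ≤ (5 * D * G)^2 := by nlinarith
        nlinarith
      set a : ℝ := s / (5 * D * G) with ha
      have ha1 : 1 < a := by
        rw [ha, lt_div_iff₀ hDG]; linarith
      have ha0 : 0 < a := by linarith
      have has : a * (5 * D * G) = s := by rw [ha]; field_simp
      have hloga0 : 0 ≤ Real.logb 2 a := Real.logb_nonneg (by norm_num) (le_of_lt ha1)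
      set i : ℕ := ⌈Real.logb 2 a⌉₊ with hi
      -- i ≤ N
      have hiN : i ≤ N := by
        rw [hi, hN]
        apply Nat.ceil_le_ceil
        have haT : a ≤ Real.sqrt T := by
          have hsle : s ≤ G * D * Real.sqrt T := by
            rw [hs]
            have hTs : (Real.sqrt T)^2 = (T:ℝ) := Real.sq_sqrt (by positivity)
            have hVB : V / B ≤ (G * D * Real.sqrt T)^2 := by
              have : V / B ≤ V := by
                rw [div_le_iff₀ hB0]; nlinarith
              nlinarith
            calc Real.sqrt (V / B) ≤ Real.sqrt ((G * D * Real.sqrt T)^2) :=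
                Real.sqrt_le_sqrt hVB
            _ = G * D * Real.sqrt T := Real.sqrt_sq (by positivity)
          rw [ha, div_le_iff₀ hDG]
          nlinarith [Real.sqrt_nonneg (T:ℝ)]
        calc Real.logb 2 a ≤ Real.logb 2 (Real.sqrt T) :=
            Real.logb_le_logb_of_le (by norm_num) ha0 haT
        _ = Real.logb 2 T / 2 := by
            rw [Real.logb, Real.logb, Real.log_sqrt (by positivity)]
            ring
      -- bounds on 2^i
      have h2i : (2:ℝ)^(i:ℕ) = (2:ℝ)^((i:ℕ):ℝ) := by
        rw [Real.rpow_natCast]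
      have h2ia : a ≤ (2:ℝ)^(i:ℕ) := by
        rw [h2i, ← Real.rpow_logb (by norm_num : (0:ℝ) < 2) (by norm_num) ha0]
        apply (Real.rpow_le_rpow_left_iff (by norm_num : (1:ℝ) < 2)).mpr
        exact Nat.le_ceil _
      have h2ia2 : (2:ℝ)^(i:ℕ) ≤ 2 * a := by
        rw [h2i]
        have hceil : ((i:ℕ):ℝ) < Real.logb 2 a + 1 := Nat.ceil_lt_add_one hloga0
        calc (2:ℝ)^((i:ℕ):ℝ) ≤ (2:ℝ)^(Real.logb 2 a + 1) := by
              apply (Real.rpow_le_rpow_left_iff (by norm_num : (1:ℝ) < 2)).mpr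
              linarith
        _ = 2 * a := by
              rw [Real.rpow_add (by norm_num),
                Real.rpow_logb (by norm_num) (by norm_num) ha0]
              rw [Real.rpow_one]; ring
      -- η i facts
      have h2ipos : (0:ℝ) < (2:ℝ)^(i:ℕ) := by positivity
      have hηi : η i = 1 / ((2:ℝ)^(i:ℕ) * (5 * D * G)) := by
        rw [hη, zpow_neg, zpow_natCast, inv_eq_one_div, div_div]
      have hηpos : 0 < η i := by rw [hηi]; positivity
      have hs2ile : s ≤ (2:ℝ)^(i:ℕ) * (5 * D * G) := by
        rw [← has]
        exact mul_le_mul_of_nonneg_right h2ia (le_of_lt hDG)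
      have hηle : η i ≤ 1 / s := by
        rw [hηi]
        exact one_div_le_one_div_of_le hs0 hs2ile
      have hηge : B / η i ≤ 2 * (s * B) := by
        rw [hηi, one_div, div_inv_eq_mul]
        calc B * ((2:ℝ)^(i:ℕ) * (5 * D * G)) ≤ B * ((2 * a) * (5 * D * G)) := by
              apply mul_le_mul_of_nonneg_left _ (le_of_lt hB0)
              exact mul_le_mul_of_nonneg_right h2ia2 (le_of_lt hDG)
        _ = 2 * (a * (5 * D * G) * B) := by ring
        _ = 2 * (s * B) := by rw [has]
      -- sB = sqrt(VB), V/s = sqrt(VB)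
      have hsB : s * B = Real.sqrt (V * B) := by
        have hq : V * B = (V / B) * B^2 := by field_simp
        rw [hq, Real.sqrt_mul (by positivity) (B^2), Real.sqrt_sq (le_of_lt hB0), hs]
      have hVs : V / s = Real.sqrt (V * B) := by
        have hq : V * B = (V / s)^2 := by
          rw [div_pow, hs2]
          field_simp
        rw [hq, Real.sqrt_sq (le_of_lt (div_pos hVpos hs0))]
      -- conclude
      have hRb : R ≤ B / η i + η i * V := hstep _ hηpos (hkey i hiN)
      have hb1 : B / η i ≤ 2 * Real.sqrt (V * B) := by rw [← hsB]; exact hηge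
      have hb2 : η i * V ≤ Real.sqrt (V * B) := by
        calc η i * V ≤ (1 / s) * V := by
              exact mul_le_mul_of_nonneg_right hηle (le_of_lt hVpos)
        _ = V / s := by ring
        _ = Real.sqrt (V * B) := hVs
      have hGD : (0:ℝ) < 10 * G * D * B := by positivity
      linarith
  linarith
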